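/- Let 0 < n < d be integers, 1 ≤ p < 2 and μ a Radon measure on ℝ^d. Then for every x ∈ ℝ^d, ∫₀^∞ β_{μ,p}^n(x,r)² dr/r ≤ ( sup_{r>0} μ(B̄(x,r))/r^n )^{2/p − 1} · ∫₀^∞ β_{μ,2}^n(x,r)² dr/r. -/

import Mathlib

open MeasureTheory Metric Set
open scoped ENNReal NNReal

noncomputable section

/-- `ℝ^d` with the Euclidean metric. -/
abbrev Ed (d : ℕ) := EuclideanSpace ℝ (Fin d)

/-- `L` is an affine `n`-plane in `ℝ^d`. -/
def IsAffinePlane (d n : ℕ) (L : AffineSubspace ℝ (Ed d)) : Prop :=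
  (L : Set (Ed d)).Nonempty ∧ Module.finrank ℝ L.direction = n

/-- The coefficient `β_{μ,p}^n(x,r)`. -/
def betaP (d n : ℕ) (p : ℝ) (μ : Measure (Ed d)) (x : Ed d) (r : ℝ) : ℝ :=
  sInf { b : ℝ | ∃ L : AffineSubspace ℝ (Ed d), IsAffinePlane d n L ∧
    b = (1 / r ^ n *
        ∫ y in closedBall x r, (Metric.infDist y (L : Set (Ed d)) / r) ^ p ∂μ) ^ (1 / p) }

/-- `dist_B(σ,ν)`: sup over ``1``-Lipschitz functions supported in `B` of `|∫ f dσ − ∫ f dν|`. -/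
def distB (d : ℕ) (B : Set (Ed d)) (σ ν : Measure (Ed d)) : ℝ :=
  sSup { t : ℝ | ∃ f : Ed d → ℝ, LipschitzWith 1 f ∧ Function.support f ⊆ B ∧
    t = |∫ y, f y ∂σ - ∫ y, f y ∂ν| }

/-- The coefficient `α_μ^n(x,r)`. -/
def alphaC (d n : ℕ) (μ : Measure (Ed d)) (x : Ed d) (r : ℝ) : ℝ :=
  (1 / r ^ (n + 1)) *
    sInf { t : ℝ | ∃ (a : ℝ≥0) (L : AffineSubspace ℝ (Ed d)), IsAffinePlane d n L ∧
      ((L : Set (Ed d)) ∩ closedBall x r).Nonempty ∧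
      t = distB d (closedBall x (3 * r)) μ
            ((a : ℝ≥0∞) • (μH[(n : ℝ)]).restrict (L : Set (Ed d))) }

/-- Jones' square function for the `β_{μ,p}^n` coefficients: `∫₀^∞ β_{μ,p}^n(x,r)² dr/r`. -/
def jonesBeta (d n : ℕ) (p : ℝ) (μ : Measure (Ed d)) (x : Ed d) : ℝ≥0∞ :=
  ∫⁻ r in Ioi (0 : ℝ), ENNReal.ofReal (betaP d n p μ x r ^ 2 / r)

/-- The square function `∫₀^∞ α_μ^n(x,r)² dr/r`. -/
def jonesAlpha (d n : ℕ) (μ : Measure (Ed d)) (x : Ed d) : ℝ≥0∞ :=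
  ∫⁻ r in Ioi (0 : ℝ), ENNReal.ofReal (alphaC d n μ x r ^ 2 / r)

/-- A set `E ⊂ ℝ^d` is `n`-rectifiable. -/
def IsRectifiableSet (d n : ℕ) (E : Set (Ed d)) : Prop :=
  ∃ f : ℕ → EuclideanSpace ℝ (Fin n) → Ed d,
    (∀ i, ∃ K : ℝ≥0, LipschitzWith K (f i)) ∧
    μH[(n : ℝ)] (E \ ⋃ i, Set.range (f i)) = 0

/-- A measure `μ` on `ℝ^d` is `n`-rectifiable. -/
def IsRectifiableMeasure (d n : ℕ) (μ : Measure (Ed d)) : Prop :=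
  ∃ E : Set (Ed d), IsRectifiableSet d n E ∧ μ Eᶜ = 0 ∧
    μ ≪ (μH[(n : ℝ)]).restrict E

/-- The support of a measure: points all whose neighbourhoods have positive measure. -/
def msupport (d : ℕ) (μ : Measure (Ed d)) : Set (Ed d) :=
  { x | ∀ r : ℝ, 0 < r → 0 < μ (ball x r) }

/-- The (half-open) dyadic cube of sidelength `2^k` determined by `m`. -/
def dyadicCube (d : ℕ) (k : ℤ) (m : Fin d → ℤ) : Set (Ed d) :=
  { y | ∀ i, (m i : ℝ) * 2 ^ k ≤ y i ∧ y i < ((m i : ℝ) + 1) * 2 ^ k }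

/-- The center of the dyadic cube. -/
def dyadicCenter (d : ℕ) (k : ℤ) (m : Fin d → ℤ) : Ed d :=
  (WithLp.equiv 2 (Fin d → ℝ)).symm fun i => ((m i : ℝ) + 1 / 2) * 2 ^ k

/-- The cube concentric with the dyadic cube `Q(k,m)`, dilated by the factor `c` (e.g. `3Q`). -/
def cubeDilate (d : ℕ) (c : ℝ) (k : ℤ) (m : Fin d → ℤ) : Set (Ed d) :=
  (fun y => dyadicCenter d k m + c • (y - dyadicCenter d k m)) '' dyadicCube d k m

/-- The ball `B_Q = B̄(x_Q, 3 diam Q)` associated with a dyadic cube. -/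
def ballBQ (d : ℕ) (k : ℤ) (m : Fin d → ℤ) : Set (Ed d) :=
  closedBall (dyadicCenter d k m) (3 * Metric.diam (dyadicCube d k m))

/-- The map `x ↦ (x, A x) ∈ ℝ^n × ℝ^{d-n} = ℝ^d`. -/
def graphMap (d n : ℕ) (A : EuclideanSpace ℝ (Fin n) → EuclideanSpace ℝ (Fin (d - n)))
    (x : EuclideanSpace ℝ (Fin n)) : Ed d :=
  (WithLp.equiv 2 (Fin d → ℝ)).symm fun i =>
    if h : (i : ℕ) < n then x ⟨i, h⟩ else A x ⟨(i : ℕ) - n, by have := i.isLt; omega⟩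

/-- `Γ ⊂ ℝ^d` is the graph of a `Λ`-Lipschitz function `A : ℝ^n → ℝ^{d-n}`. -/
def IsLipschitzGraph (d n : ℕ) (Λ : ℝ≥0) (Γ : Set (Ed d)) : Prop :=
  ∃ A : EuclideanSpace ℝ (Fin n) → EuclideanSpace ℝ (Fin (d - n)),
    LipschitzWith Λ A ∧ Γ = Set.range (graphMap d n A)

/-- The distance between two subsets of `ℝ^d`. -/
def setDist' (d : ℕ) (s t : Set (Ed d)) : ℝ :=
  sInf { r : ℝ | ∃ p ∈ s, ∃ q ∈ t, r = dist p q }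

private lemma exists_affinePlane (d n : ℕ) (hnd : n ≤ d) :
    ∃ L : AffineSubspace ℝ (Ed d), IsAffinePlane d n L := by
  classical
  set v : Fin n → Ed d := fun i => (EuclideanSpace.basisFun (Fin d) ℝ).toBasis (Fin.castLE hnd i)
    with hv
  have hli : LinearIndependent ℝ v :=
    (EuclideanSpace.basisFun (Fin d) ℝ).toBasis.linearIndependent.comp _
      (Fin.castLE_injective hnd)
  refine ⟨(Submodule.span ℝ (Set.range v)).toAffineSubspace, ⟨0, ?_⟩, ?_⟩
  · exact (Submodule.mem_toAffineSubspace).2 (Submodule.zero_mem _)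
  · rw [Submodule.toAffineSubspace_direction]
    simpa using finrank_span_eq_card hli

private lemma betaP_set_nonneg {d n : ℕ} {p : ℝ} {μ : Measure (Ed d)} {x : Ed d}
    {r : ℝ} (hr : 0 < r) :
    ∀ b ∈ {b : ℝ | ∃ L : AffineSubspace ℝ (Ed d), IsAffinePlane d n L ∧
      b = (1 / r ^ n * ∫ y in closedBall x r,
        (Metric.infDist y (L : Set (Ed d)) / r) ^ p ∂μ) ^ (1 / p)}, 0 ≤ b := by
  rintro b ⟨L, -, rfl⟩
  apply Real.rpow_nonneg
  apply mul_nonneg (by positivity)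
  exact integral_nonneg fun y => Real.rpow_nonneg (div_nonneg Metric.infDist_nonneg hr.le) _

private lemma betaP_nonneg {d n : ℕ} {p : ℝ} {μ : Measure (Ed d)} {x : Ed d}
    {r : ℝ} (hr : 0 < r) : 0 ≤ betaP d n p μ x r :=
  Real.sInf_nonneg (betaP_set_nonneg hr)

private lemma rpow_algebra {u X m p : ℝ} (hu : 0 < u) (hX : 0 ≤ X) (hm : 0 ≤ m)
    (hp0 : 0 < p) :
    (1/u * (X ^ (p/2) * m ^ ((2-p)/2))) ^ (1/p)
      = (m/u) ^ (1/p - 1/2) * (1/u * X) ^ (1/(2:ℝ)) := by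
  have hu0 : (0:ℝ) ≤ 1/u := by positivity
  have hv : (0:ℝ) < 1/u := by positivity
  rw [Real.mul_rpow hu0 (mul_nonneg (Real.rpow_nonneg hX _) (Real.rpow_nonneg hm _)),
      Real.mul_rpow (Real.rpow_nonneg hX _) (Real.rpow_nonneg hm _),
      ← Real.rpow_mul hX, ← Real.rpow_mul hm]
  have h2p : (2:ℝ) * p ≠ 0 := by positivity
  have e1 : p/2 * (1/p) = 1/2 := by
    rw [div_mul_div_comm, mul_one, div_eq_div_iff h2p two_ne_zero]
    ring
  have e2 : (2-p)/2 * (1/p) = 1/p - 1/2 := by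
    rw [div_mul_div_comm, mul_one, div_sub_div _ _ hp0.ne' two_ne_zero,
      div_eq_div_iff h2p (by positivity)]
    ring
  rw [e1, e2, div_eq_mul_one_div m u, Real.mul_rpow hm hu0, Real.mul_rpow hu0 hX]
  have e3 : (1/u) ^ (1/p) = (1/u) ^ (1/p - 1/2) * (1/u) ^ (1/(2:ℝ)) := by
    rw [← Real.rpow_add hv]
    norm_num
  rw [e3]
  ring

private lemma holder_core {d n : ℕ} {p : ℝ} (hp1 : 1 ≤ p) (hp2 : p < 2)
    (μ : Measure (Ed d)) [IsLocallyFiniteMeasure μ] (x : Ed d) {r : ℝ} (hr : 0 < r)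
    (L : AffineSubspace ℝ (Ed d)) :
    (1 / r ^ n * ∫ y in closedBall x r,
        (Metric.infDist y (L : Set (Ed d)) / r) ^ p ∂μ) ^ (1 / p) ≤
      ((μ (closedBall x r)).toReal / r ^ n) ^ (1 / p - 1 / 2) *
      (1 / r ^ n * ∫ y in closedBall x r,
        (Metric.infDist y (L : Set (Ed d)) / r) ^ (2:ℝ) ∂μ) ^ (1 / (2:ℝ)) := by
  have hp0 : 0 < p := lt_of_lt_of_le one_pos hp1
  set B := closedBall x r with hB
  set F : Ed d → ℝ := fun y => Metric.infDist y (L : Set (Ed d)) / r with hF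
  have hF0 : ∀ y, 0 ≤ F y := fun y => div_nonneg Metric.infDist_nonneg hr.le
  have hFc : Continuous F := (Metric.continuous_infDist_pt _).div_const r
  set G : Ed d → ℝ≥0∞ := fun y => ENNReal.ofReal (F y) with hG
  have hGm : Measurable G := ENNReal.measurable_ofReal.comp hFc.measurable
  have key : ∀ q : ℝ, 0 ≤ q →
      ∫ y in B, F y ^ q ∂μ = (∫⁻ y in B, G y ^ q ∂μ).toReal := by
    intro q hq
    rw [MeasureTheory.integral_eq_lintegral_of_nonneg_ae
      (ae_of_all _ fun y => Real.rpow_nonneg (hF0 y) q)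
      ((hFc.rpow_const fun y => Or.inr hq).aestronglyMeasurable)]
    congr 1
    refine lintegral_congr fun y => ?_
    exact (ENNReal.ofReal_rpow_of_nonneg (hF0 y) hq).symm
  have hμB : μ B ≠ ⊤ := measure_closedBall_lt_top.ne
  set K := (Metric.infDist x (L : Set (Ed d)) + r)/r with hK
  have hK0 : 0 ≤ K := div_nonneg (add_nonneg Metric.infDist_nonneg hr.le) hr.le
  have hbound : ∀ y ∈ B, F y ≤ K := by
    intro y hy
    refine (div_le_div_iff_of_pos_right hr).mpr ?_
    calc Metric.infDist y (L : Set (Ed d))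
        ≤ Metric.infDist x (L : Set (Ed d)) + dist y x := by
          have := Metric.infDist_le_infDist_add_dist (x := y) (y := x)
            (s := (L : Set (Ed d)))
          linarith [this]
      _ ≤ Metric.infDist x (L : Set (Ed d)) + r := by
          have := mem_closedBall.mp hy
          linarith
  have hA2top : (∫⁻ y in B, G y ^ (2:ℝ) ∂μ) ≠ ⊤ := by
    have hle : (∫⁻ y in B, G y ^ (2:ℝ) ∂μ) ≤ ENNReal.ofReal (K ^ (2:ℝ)) * μ B := by
      calc (∫⁻ y in B, G y ^ (2:ℝ) ∂μ)
          ≤ ∫⁻ _ in B, ENNReal.ofReal (K ^ (2:ℝ)) ∂μ := by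
            refine lintegral_mono_ae ?_
            filter_upwards [ae_restrict_mem measurableSet_closedBall] with y hy
            rw [hG, ENNReal.ofReal_rpow_of_nonneg (hF0 y) (by norm_num)]
            exact ENNReal.ofReal_le_ofReal
              (Real.rpow_le_rpow (hF0 y) (hbound y hy) (by norm_num))
        _ = ENNReal.ofReal (K ^ (2:ℝ)) * μ B := setLIntegral_const _ _
    exact (lt_of_le_of_lt hle (ENNReal.mul_lt_top ENNReal.ofReal_lt_top hμB.lt_top)).ne
  have hconj : (2/p).HolderConjugate (2/(2-p)) := by
    constructor
    · rw [inv_div, inv_div, ← add_div]; norm_num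
    · positivity
    · apply div_pos <;> linarith
  have holder := ENNReal.lintegral_mul_le_Lp_mul_Lq (μ.restrict B) hconj
    (f := fun y => G y ^ p) (g := fun _ => (1:ℝ≥0∞))
    ((hGm.pow measurable_const).aemeasurable) aemeasurable_const
  simp only [Pi.mul_apply, mul_one, ENNReal.one_rpow, lintegral_one,
    Measure.restrict_apply_univ, one_div_div] at holder
  have hexp : ∀ y : Ed d, (G y ^ p) ^ (2/p) = G y ^ (2:ℝ) := by
    intro y
    rw [← ENNReal.rpow_mul]
    congr 1
    field_simp
  simp only [hexp] at holder
  have hRfin : (∫⁻ y in B, G y ^ (2:ℝ) ∂μ) ^ (p/2) * (μ B) ^ ((2-p)/2) ≠ ⊤ :=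
    ENNReal.mul_ne_top (ENNReal.rpow_ne_top_of_nonneg (by positivity) hA2top)
      (ENNReal.rpow_ne_top_of_nonneg (by linarith) hμB)
  have hreal : (∫⁻ y in B, G y ^ p ∂μ).toReal ≤
      (∫⁻ y in B, G y ^ (2:ℝ) ∂μ).toReal ^ (p/2) * (μ B).toReal ^ ((2-p)/2) := by
    have := ENNReal.toReal_mono hRfin holder
    rwa [ENNReal.toReal_mul, ← ENNReal.toReal_rpow, ← ENNReal.toReal_rpow] at this
  rw [key p hp0.le, key 2 (by norm_num)]
  calc (1 / r ^ n * (∫⁻ y in B, G y ^ p ∂μ).toReal) ^ (1/p)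
      ≤ (1 / r ^ n * ((∫⁻ y in B, G y ^ (2:ℝ) ∂μ).toReal ^ (p/2) *
          (μ B).toReal ^ ((2-p)/2))) ^ (1/p) := by
        refine Real.rpow_le_rpow ?_ (mul_le_mul_of_nonneg_left hreal (by positivity))
          (by positivity)
        exact mul_nonneg (by positivity) ENNReal.toReal_nonneg
    _ = ((μ B).toReal / r ^ n) ^ (1/p - 1/2) *
        (1 / r ^ n * (∫⁻ y in B, G y ^ (2:ℝ) ∂μ).toReal) ^ (1/(2:ℝ)) :=
        rpow_algebra (pow_pos hr n) ENNReal.toReal_nonneg ENNReal.toReal_nonneg hp0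

private lemma betaP_le {d n : ℕ} (hnd : n ≤ d) {p : ℝ} (hp1 : 1 ≤ p) (hp2 : p < 2)
    (μ : Measure (Ed d)) [IsLocallyFiniteMeasure μ] (x : Ed d) {r : ℝ} (hr : 0 < r) :
    betaP d n p μ x r ≤
      ((μ (closedBall x r)).toReal / r ^ n) ^ (1/p - 1/2) * betaP d n 2 μ x r := by
  have hp0 : 0 < p := lt_of_lt_of_le one_pos hp1
  set C : ℝ := ((μ (closedBall x r)).toReal / r ^ n) ^ (1/p - 1/2) with hC
  have hC0 : 0 ≤ C := Real.rpow_nonneg (by positivity) _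
  have hkey : ∀ b ∈ {b : ℝ | ∃ L : AffineSubspace ℝ (Ed d), IsAffinePlane d n L ∧
      b = (1 / r ^ n * ∫ y in closedBall x r,
        (Metric.infDist y (L : Set (Ed d)) / r) ^ (2:ℝ) ∂μ) ^ (1/(2:ℝ))},
      betaP d n p μ x r ≤ C * b := by
    rintro b ⟨L, hL, rfl⟩
    have h1 : betaP d n p μ x r ≤ (1 / r ^ n * ∫ y in closedBall x r,
        (Metric.infDist y (L : Set (Ed d)) / r) ^ p ∂μ) ^ (1/p) :=
      csInf_le ⟨0, betaP_set_nonneg hr⟩ ⟨L, hL, rfl⟩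
    exact h1.trans (holder_core hp1 hp2 μ x hr L)
  obtain ⟨L0, hL0⟩ := exists_affinePlane d n hnd
  have hne : ∃ b, b ∈ {b : ℝ | ∃ L : AffineSubspace ℝ (Ed d), IsAffinePlane d n L ∧
      b = (1 / r ^ n * ∫ y in closedBall x r,
        (Metric.infDist y (L : Set (Ed d)) / r) ^ (2:ℝ) ∂μ) ^ (1/(2:ℝ))} :=
    ⟨_, ⟨L0, hL0, rfl⟩⟩
  rcases eq_or_lt_of_le hC0 with hCz | hCp
  · obtain ⟨b0, hb0⟩ := hne
    have := hkey b0 hb0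
    rw [← hCz] at this ⊢
    simpa using this
  · rw [show betaP d n 2 μ x r = sInf _ from rfl]
    rw [mul_comm, ← div_le_iff₀ hCp]
    refine le_csInf hne ?_
    intro b hb
    rw [div_le_iff₀ hCp, mul_comm]
    exact hkey b hb

private lemma pointwise_bound {d n : ℕ} (hnd : n ≤ d) {p : ℝ} (hp1 : 1 ≤ p) (hp2 : p < 2)
    (μ : Measure (Ed d)) [IsLocallyFiniteMeasure μ] (x : Ed d) {r : ℝ} (hr : 0 < r) :
    ENNReal.ofReal (betaP d n p μ x r ^ 2 / r) ≤
      (μ (closedBall x r) / ENNReal.ofReal (r ^ n)) ^ (2 / p - 1) *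
        ENNReal.ofReal (betaP d n 2 μ x r ^ 2 / r) := by
  have hp0 : 0 < p := lt_of_lt_of_le one_pos hp1
  have he0 : 0 ≤ 2 / p - 1 := by
    rw [sub_nonneg, le_div_iff₀ hp0]; linarith
  set m := (μ (closedBall x r)).toReal with hm
  have hq : (0:ℝ) ≤ m / r ^ n := by positivity
  have h1 := betaP_le hnd hp1 hp2 μ x hr (n := n)
  have hsq : ((m / r ^ n) ^ (1/p - 1/2)) ^ 2 = (m / r ^ n) ^ (2/p - 1) := by
    rw [← Real.rpow_natCast ((m / r ^ n) ^ (1/p - 1/2)) 2, ← Real.rpow_mul hq]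
    congr 1
    push_cast
    ring
  have h2 : betaP d n p μ x r ^ 2 ≤ (m / r ^ n) ^ (2/p - 1) * betaP d n 2 μ x r ^ 2 := by
    calc betaP d n p μ x r ^ 2
        ≤ ((m / r ^ n) ^ (1/p - 1/2) * betaP d n 2 μ x r) ^ 2 :=
          pow_le_pow_left₀ (betaP_nonneg hr) h1 2
      _ = ((m / r ^ n) ^ (1/p - 1/2)) ^ 2 * betaP d n 2 μ x r ^ 2 := mul_pow _ _ 2
      _ = (m / r ^ n) ^ (2/p - 1) * betaP d n 2 μ x r ^ 2 := by rw [hsq]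
  have h3 : betaP d n p μ x r ^ 2 / r ≤
      (m / r ^ n) ^ (2/p - 1) * (betaP d n 2 μ x r ^ 2 / r) := by
    rw [← mul_div_assoc]
    exact (div_le_div_iff_of_pos_right hr).mpr h2
  calc ENNReal.ofReal (betaP d n p μ x r ^ 2 / r)
      ≤ ENNReal.ofReal ((m / r ^ n) ^ (2/p - 1) * (betaP d n 2 μ x r ^ 2 / r)) :=
        ENNReal.ofReal_le_ofReal h3
    _ = ENNReal.ofReal ((m / r ^ n) ^ (2/p - 1)) *
        ENNReal.ofReal (betaP d n 2 μ x r ^ 2 / r) :=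
        ENNReal.ofReal_mul (Real.rpow_nonneg hq _)
    _ = (μ (closedBall x r) / ENNReal.ofReal (r ^ n)) ^ (2 / p - 1) *
        ENNReal.ofReal (betaP d n 2 μ x r ^ 2 / r) := by
        rw [← ENNReal.ofReal_rpow_of_nonneg hq he0, ENNReal.ofReal_div_of_pos (by positivity),
          hm, ENNReal.ofReal_toReal measure_closedBall_lt_top.ne]

/-- For `1 ≤ p < 2` and a Radon measure `μ` on `ℝ^d`, for every `x`,
`∫₀^∞ β_{μ,p}^n(x,r)² dr/r ≤ (sup_{r>0} μ(B̄(x,r))/r^n)^{2/p − 1} ∫₀^∞ β_{μ,2}^n(x,r)² dr/r`. -/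
theorem stmt10 (d n : ℕ) (hn : 0 < n) (hnd : n < d) (p : ℝ) (hp1 : 1 ≤ p) (hp2 : p < 2)
    (μ : Measure (Ed d)) [IsLocallyFiniteMeasure μ] (x : Ed d) :
    jonesBeta d n p μ x ≤
      (⨆ r : {r : ℝ // 0 < r}, μ (closedBall x (r : ℝ)) / ENNReal.ofReal ((r : ℝ) ^ n)) ^
          (2 / p - 1) *
        jonesBeta d n 2 μ x := by
  have hp0 : 0 < p := lt_of_lt_of_le one_pos hp1
  have he0 : 0 ≤ 2 / p - 1 := by
    rw [sub_nonneg, le_div_iff₀ hp0]; linarith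
  set M := ⨆ r : {r : ℝ // 0 < r}, μ (closedBall x (r : ℝ)) / ENNReal.ofReal ((r : ℝ) ^ n)
    with hM
  set f' : ℝ → ℝ≥0∞ := fun r => (μ (closedBall x r) / ENNReal.ofReal (r ^ n)) ^ (2/p - 1)
    with hf'
  set h : ℝ → ℝ≥0∞ := fun r => ENNReal.ofReal (betaP d n 2 μ x r ^ 2 / r) with hh
  have step1 : jonesBeta d n p μ x ≤ ∫⁻ r in Ioi (0:ℝ), f' r * h r := by
    refine lintegral_mono_ae ?_
    filter_upwards [ae_restrict_mem measurableSet_Ioi] with r hr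
    exact pointwise_bound hnd.le hp1 hp2 μ x hr
  have hfin : ∀ r : ℝ, 0 < r → f' r ≠ ⊤ := by
    intro r hr
    apply ENNReal.rpow_ne_top_of_nonneg he0
    exact (ENNReal.div_lt_top measure_closedBall_lt_top.ne
      (ENNReal.ofReal_pos.mpr (by positivity)).ne').ne
  rcases eq_or_ne (jonesBeta d n 2 μ x) 0 with h0 | h0
  · have hmeas : Measurable f' := by
      have h1 : Measurable fun r : ℝ => μ (closedBall x r) := by
        apply Monotone.measurable
        intro a b hab
        exact measure_mono (closedBall_subset_closedBall hab)
      exact (h1.div (ENNReal.measurable_ofReal.comp (measurable_id.pow_const n))).pow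
        measurable_const
    have key : ∫⁻ r in Ioi (0:ℝ), f' r * h r = 0 := by
      refine le_antisymm ?_ zero_le
      have hsub : Ioi (0:ℝ) ⊆ ⋃ k : ℕ, {r : ℝ | f' r ≤ (k : ℝ≥0∞)} ∩ Ioi 0 := by
        intro r hr
        obtain ⟨k, hk⟩ := ENNReal.exists_nat_gt (hfin r hr)
        exact mem_iUnion.2 ⟨k, ⟨hk.le, hr⟩⟩
      have hzero : ∀ k : ℕ,
          ∫⁻ r in {r : ℝ | f' r ≤ (k : ℝ≥0∞)} ∩ Ioi 0, f' r * h r = 0 := by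
        intro k
        have hSm : MeasurableSet ({r : ℝ | f' r ≤ (k : ℝ≥0∞)} ∩ Ioi 0) :=
          (hmeas measurableSet_Iic).inter measurableSet_Ioi
        refine le_antisymm ?_ zero_le
        calc ∫⁻ r in {r : ℝ | f' r ≤ (k : ℝ≥0∞)} ∩ Ioi 0, f' r * h r
            ≤ ∫⁻ r in {r : ℝ | f' r ≤ (k : ℝ≥0∞)} ∩ Ioi 0, (k : ℝ≥0∞) * h r := by
              refine lintegral_mono_ae ?_
              filter_upwards [ae_restrict_mem hSm] with r hr
              exact mul_le_mul_left hr.1 _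
          _ = (k : ℝ≥0∞) * ∫⁻ r in {r : ℝ | f' r ≤ (k : ℝ≥0∞)} ∩ Ioi 0, h r :=
              lintegral_const_mul' _ _ (ENNReal.natCast_ne_top k)
          _ ≤ (k : ℝ≥0∞) * ∫⁻ r in Ioi (0:ℝ), h r :=
              mul_le_mul_right (lintegral_mono_set inter_subset_right) _
          _ = 0 := by rw [show ∫⁻ r in Ioi (0:ℝ), h r = jonesBeta d n 2 μ x from rfl, h0,
              mul_zero]
      calc ∫⁻ r in Ioi (0:ℝ), f' r * h r
          ≤ ∫⁻ r in ⋃ k : ℕ, {r : ℝ | f' r ≤ (k : ℝ≥0∞)} ∩ Ioi 0, f' r * h r :=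
            lintegral_mono_set hsub
        _ ≤ ∑' k : ℕ, ∫⁻ r in {r : ℝ | f' r ≤ (k : ℝ≥0∞)} ∩ Ioi 0, f' r * h r :=
            lintegral_iUnion_le _ _
        _ = 0 := by simp [hzero]
    exact le_trans (step1.trans_eq key) zero_le
  · rcases eq_or_ne (M ^ (2/p - 1)) ⊤ with hMe | hMe
    · rw [hMe, ENNReal.top_mul h0]
      exact le_top
    · calc jonesBeta d n p μ x ≤ ∫⁻ r in Ioi (0:ℝ), f' r * h r := step1
        _ ≤ ∫⁻ r in Ioi (0:ℝ), M ^ (2/p - 1) * h r := by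
            refine lintegral_mono_ae ?_
            filter_upwards [ae_restrict_mem measurableSet_Ioi] with r hr
            refine mul_le_mul_left (ENNReal.rpow_le_rpow ?_ he0) _
            exact le_iSup
              (fun s : {r : ℝ // 0 < r} => μ (closedBall x (s : ℝ)) /
                ENNReal.ofReal ((s : ℝ) ^ n)) ⟨r, hr⟩
        _ = M ^ (2/p - 1) * jonesBeta d n 2 μ x := lintegral_const_mul' _ _ hMe


end
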